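/- arXiv:2402.05618 — 2 statements merged into one kernel-verified Lean document; each statement's English description precedes it below -/
import Mathlib

section
/- Let h : (0,∞) → [0,∞) be measurable and suppose there exist C > 0 and γ ∈ (0,1) such that ∫_{1+t}^{1+2t} h(τ)² dτ ≤ C t^{−γ} for all t > 0. Then for all t ≥ 2, ∫_1^t h(τ) dτ ≤ C' t^{(1−γ)/2} (if γ < 1) for some constant C' depending only on C and γ. -/
open MeasureTheory

lemma block_bound (h : ℝ → ℝ) (C γ : ℝ) (hC : 0 < C)
    (hmeas : Measurable h) (hnonneg : ∀ τ, 0 ≤ h τ)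
    (hyp : ∀ t : ℝ, 0 < t →
      (∫⁻ τ in Set.Ioc (1+t) (1+2*t), ENNReal.ofReal (h τ ^ 2)) ≤
        ENNReal.ofReal (C * t ^ (-γ))) (x : ℝ) :
    (∫⁻ τ in Set.Ioc (1 + (2:ℝ)^x) (1 + (2:ℝ)^(x+1)), ENNReal.ofReal (h τ)) ≤
      ENNReal.ofReal (Real.sqrt C * (2:ℝ) ^ (x*(1-γ)/2)) := by
  set s : ℝ := (2:ℝ)^x with hs
  have hspos : 0 < s := Real.rpow_pos_of_pos two_pos x
  have h2x1 : (2:ℝ)^(x+1) = 2 * s := by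
    rw [hs, Real.rpow_add_one two_ne_zero]; ring
  rw [h2x1]
  set S : Set ℝ := Set.Ioc (1 + s) (1 + 2*s) with hS
  have hmS : volume S = ENNReal.ofReal s := by
    rw [hS, Real.volume_Ioc]; congr 1; ring
  have hCS : (∫⁻ τ in S, ENNReal.ofReal (h τ)) ≤
      (∫⁻ τ in S, ENNReal.ofReal (h τ) ^ (2:ℝ)) ^ (1/(2:ℝ)) *
      (∫⁻ _ in S, (1:ENNReal) ^ (2:ℝ)) ^ (1/(2:ℝ)) := by
    have := ENNReal.lintegral_mul_le_Lp_mul_Lq (volume.restrict S)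
      (p := 2) (q := 2) ⟨by norm_num, by norm_num, by norm_num⟩
      (f := fun τ => ENNReal.ofReal (h τ)) (g := fun _ => 1)
      ((ENNReal.measurable_ofReal.comp hmeas).aemeasurable) aemeasurable_const
    simpa using this
  have hsq : ∀ τ, ENNReal.ofReal (h τ) ^ (2:ℝ) = ENNReal.ofReal (h τ ^ 2) := by
    intro τ
    rw [ENNReal.ofReal_rpow_of_nonneg (hnonneg τ) (by norm_num : (0:ℝ) ≤ 2), Real.rpow_two]
  have h1 : (∫⁻ τ in S, ENNReal.ofReal (h τ) ^ (2:ℝ)) ≤ ENNReal.ofReal (C * s ^ (-γ)) := by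
    simp_rw [hsq]; exact hyp s hspos
  have h2 : (∫⁻ _ in S, (1:ENNReal) ^ (2:ℝ)) = ENNReal.ofReal s := by
    simp [hmS]
  calc (∫⁻ τ in S, ENNReal.ofReal (h τ))
      ≤ (ENNReal.ofReal (C * s ^ (-γ))) ^ (1/(2:ℝ)) * (ENNReal.ofReal s) ^ (1/(2:ℝ)) := by
        refine hCS.trans ?_
        rw [h2]
        exact mul_le_mul' (ENNReal.rpow_le_rpow h1 (by norm_num)) le_rfl
    _ = ENNReal.ofReal ((C * s ^ (-γ)) ^ (1/(2:ℝ)) * s ^ (1/(2:ℝ))) := by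
        rw [ENNReal.ofReal_rpow_of_nonneg (by positivity) (by norm_num : (0:ℝ) ≤ 1/2),
          ENNReal.ofReal_rpow_of_nonneg hspos.le (by norm_num : (0:ℝ) ≤ 1/2),
          ENNReal.ofReal_mul (by positivity)]
    _ = ENNReal.ofReal (Real.sqrt C * (2:ℝ) ^ (x*(1-γ)/2)) := by
        congr 1
        rw [Real.mul_rpow hC.le (by positivity), Real.sqrt_eq_rpow, mul_assoc]
        congr 1
        rw [hs, ← Real.rpow_mul (by norm_num : (0:ℝ) ≤ 2) x (-γ),
          ← Real.rpow_mul (by norm_num : (0:ℝ) ≤ 2) x (1/2),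
          ← Real.rpow_mul (by norm_num : (0:ℝ) ≤ 2) (x * -γ) (1/2),
          ← Real.rpow_add two_pos]
        congr 1
        ring

/-- Hishida-type lemma: if `∫_{1+t}^{1+2t} h(τ)² dτ ≤ C t^{−γ}` for all `t > 0` with
`γ ∈ (0,1)`, then `∫_1^t h(τ) dτ ≤ C' t^{(1−γ)/2}` for all `t ≥ 2`. -/
theorem dyadic_l2_to_l1 (h : ℝ → ℝ) (C γ : ℝ) (hC : 0 < C) (hγ0 : 0 < γ) (hγ1 : γ < 1)
    (hmeas : Measurable h) (hnonneg : ∀ τ, 0 ≤ h τ)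
    (hyp : ∀ t : ℝ, 0 < t →
      (∫⁻ τ in Set.Ioc (1+t) (1+2*t), ENNReal.ofReal (h τ ^ 2)) ≤
        ENNReal.ofReal (C * t ^ (-γ))) :
    ∃ C' > (0:ℝ), ∀ t : ℝ, 2 ≤ t →
      (∫⁻ τ in Set.Ioc (1:ℝ) t, ENNReal.ofReal (h τ)) ≤
        ENNReal.ofReal (C' * t ^ ((1-γ)/2)) := by
  set θ : ℝ := (2:ℝ) ^ (-((1-γ)/2)) with hθdef
  have hθ0 : 0 < θ := Real.rpow_pos_of_pos two_pos _
  have hθ1 : θ < 1 := by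
    rw [hθdef]
    exact Real.rpow_lt_one_of_one_lt_of_neg one_lt_two (by linarith)
  refine ⟨Real.sqrt C * (1 - θ)⁻¹,
    mul_pos (Real.sqrt_pos.mpr hC) (inv_pos.mpr (by linarith)), ?_⟩
  intro t ht
  have ht0 : (0:ℝ) < t := by linarith
  set N : ℕ := ⌊Real.logb 2 t⌋₊ with hN
  have hlogb0 : 0 ≤ Real.logb 2 t := Real.logb_nonneg one_lt_two (by linarith)
  have h2N : (2:ℝ) ^ (N:ℝ) ≤ t := by
    calc (2:ℝ) ^ (N:ℝ) ≤ (2:ℝ) ^ (Real.logb 2 t) :=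
          Real.rpow_le_rpow_of_exponent_le one_le_two (Nat.floor_le hlogb0)
      _ = t := Real.rpow_logb two_pos (by norm_num) ht0
  have ht2 : t ≤ (2:ℝ) ^ ((N:ℝ) + 1) := by
    calc t = (2:ℝ) ^ (Real.logb 2 t) := (Real.rpow_logb two_pos (by norm_num) ht0).symm
      _ ≤ (2:ℝ) ^ ((N:ℝ) + 1) :=
          Real.rpow_le_rpow_of_exponent_le one_le_two (Nat.lt_floor_add_one _).le
  -- the dyadic blocks
  set x : ℕ → ℝ := fun n => (N:ℝ) - n with hx
  set s : ℕ → Set ℝ := fun n => Set.Ioc (1 + (2:ℝ) ^ (x n)) (1 + (2:ℝ) ^ (x n + 1)) with hsdef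
  -- covering
  have hcover : Set.Ioc (1:ℝ) t ⊆ ⋃ n, s n := by
    intro τ hτ
    obtain ⟨hτ1, hτt⟩ := hτ
    have hu : 0 < τ - 1 := by linarith
    have hτeq : τ - 1 = (2:ℝ) ^ (Real.logb 2 (τ - 1)) :=
      (Real.rpow_logb two_pos (by norm_num) hu).symm
    set y : ℝ := Real.logb 2 (τ - 1) with hy
    have hylt : y < (N:ℝ) + 1 := by
      have h1 : τ - 1 < (2:ℝ) ^ ((N:ℝ) + 1) := by
        have := ht2; linarith
      by_contra hcon
      push_neg at hcon
      have : (2:ℝ) ^ ((N:ℝ) + 1) ≤ (2:ℝ) ^ y :=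
        Real.rpow_le_rpow_of_exponent_le one_le_two hcon
      rw [← hτeq] at this
      linarith
    set k : ℤ := ⌈y⌉ with hk
    have hkN : k ≤ (N:ℤ) + 1 := by
      have : (k:ℝ) ≤ (N:ℝ) + 1 := by
        rcases Int.ceil_le_ceil hylt.le with hle
        calc (k:ℝ) ≤ (⌈(N:ℝ)+1⌉ : ℝ) := by exact_mod_cast hle
          _ = (N:ℝ) + 1 := by
            norm_num
      exact_mod_cast this
    refine Set.mem_iUnion.mpr ⟨((N:ℤ) + 1 - k).toNat, ?_⟩
    have hnk : (((((N:ℤ) + 1 - k).toNat : ℕ)) : ℤ) = (N:ℤ) + 1 - k :=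
      Int.toNat_of_nonneg (by omega)
    have hxk : x (((N:ℤ) + 1 - k).toNat) = (k:ℝ) - 1 := by
      have hcast : ((((N:ℤ) + 1 - k).toNat : ℕ) : ℝ) = (N:ℝ) + 1 - (k:ℝ) := by
        exact_mod_cast hnk
      show (N:ℝ) - ((((N:ℤ) + 1 - k).toNat : ℕ) : ℝ) = (k:ℝ) - 1
      rw [hcast]; ring
    constructor
    · -- 1 + 2^(k-1) < τ
      rw [hxk]
      have : (2:ℝ) ^ ((k:ℝ) - 1) < (2:ℝ) ^ y := by
        apply Real.rpow_lt_rpow_of_exponent_lt one_lt_two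
        have := Int.ceil_lt_add_one y
        push_cast at this ⊢
        linarith
      rw [← hτeq] at this
      linarith
    · -- τ ≤ 1 + 2^((k-1)+1)
      rw [hxk]
      have : (2:ℝ) ^ y ≤ (2:ℝ) ^ ((k:ℝ) - 1 + 1) := by
        apply Real.rpow_le_rpow_of_exponent_le one_le_two
        have := Int.le_ceil y
        push_cast at this ⊢
        linarith
      rw [← hτeq] at this
      linarith
  -- geometric sum
  have ha : ∀ n : ℕ, Real.sqrt C * (2:ℝ) ^ (x n * (1-γ)/2) =
      (Real.sqrt C * (2:ℝ) ^ ((N:ℝ) * (1-γ)/2)) * θ ^ n := by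
    intro n
    rw [hx, hθdef, ← Real.rpow_natCast ((2:ℝ) ^ (-((1-γ)/2))) n,
      ← Real.rpow_mul (by norm_num : (0:ℝ) ≤ 2), mul_assoc,
      ← Real.rpow_add two_pos]
    congr 2
    ring
  have hsummable : Summable (fun n : ℕ => θ ^ n) :=
    summable_geometric_of_lt_one hθ0.le hθ1
  calc (∫⁻ τ in Set.Ioc (1:ℝ) t, ENNReal.ofReal (h τ))
      ≤ ∫⁻ τ in ⋃ n, s n, ENNReal.ofReal (h τ) := lintegral_mono_set hcover
    _ ≤ ∑' n, ∫⁻ τ in s n, ENNReal.ofReal (h τ) := lintegral_iUnion_le _ _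
    _ ≤ ∑' n, ENNReal.ofReal (Real.sqrt C * (2:ℝ) ^ (x n * (1-γ)/2)) :=
        ENNReal.tsum_le_tsum fun n => block_bound h C γ hC hmeas hnonneg hyp (x n)
    _ = ENNReal.ofReal (∑' n, Real.sqrt C * (2:ℝ) ^ (x n * (1-γ)/2)) := by
        rw [ENNReal.ofReal_tsum_of_nonneg (fun n => by positivity)]
        apply Summable.congr ((hsummable.mul_left (Real.sqrt C * (2:ℝ) ^ ((N:ℝ) * (1-γ)/2))))
        intro n
        rw [ha n]
    _ ≤ ENNReal.ofReal (Real.sqrt C * (1 - θ)⁻¹ * t ^ ((1-γ)/2)) := by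
        apply ENNReal.ofReal_le_ofReal
        have htsum : (∑' n, Real.sqrt C * (2:ℝ) ^ (x n * (1-γ)/2)) =
            (Real.sqrt C * (2:ℝ) ^ ((N:ℝ) * (1-γ)/2)) * (1-θ)⁻¹ := by
          rw [tsum_congr ha, tsum_mul_left, tsum_geometric_of_lt_one hθ0.le hθ1]
        rw [htsum]
        have hpow : (2:ℝ) ^ ((N:ℝ) * (1-γ)/2) ≤ t ^ ((1-γ)/2) := by
          have : ((2:ℝ) ^ ((N:ℝ))) ^ ((1-γ)/2) ≤ t ^ ((1-γ)/2) :=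
            Real.rpow_le_rpow (by positivity) h2N (by linarith)
          have hexp : (N:ℝ) * ((1-γ)/2) = (N:ℝ) * (1-γ)/2 := by ring
          rwa [← Real.rpow_mul (by norm_num : (0:ℝ) ≤ 2), hexp] at this
        have h1θ : 0 < (1 - θ)⁻¹ := inv_pos.mpr (by linarith)
        calc Real.sqrt C * (2:ℝ) ^ ((N:ℝ) * (1-γ)/2) * (1-θ)⁻¹
            ≤ Real.sqrt C * t ^ ((1-γ)/2) * (1-θ)⁻¹ := by
              apply mul_le_mul_of_nonneg_right _ h1θ.le
              exact mul_le_mul_of_nonneg_left hpow (Real.sqrt_nonneg C)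
          _ = Real.sqrt C * (1-θ)⁻¹ * t ^ ((1-γ)/2) := by ring
end

section
/- Let 0 ≤ a < 1, σ₂ > 0, b > 0, s₀ < q with −(3/2)(1/s₀ − 1/r) < −1 in appropriate ranges, and consider the Duhamel bound ‖v(t)‖ ≤ C t^{−b}‖f‖ + ‖f‖∫₀ᵗ (t−τ)^{−b}(1+t−τ)^{−β} τ^{−1+a}(1+τ)^{1−a−σ₂} dτ with β > 1 − b. Then for t ≥ 2, ‖v(t)‖ ≤ C t^{−min{σ₂, b}} ‖f‖. -/
open MeasureTheory Set

/-- `(t/2)^c = 2^(-c) * t^c` for `t > 0`. -/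
private lemma half_rpow {t : ℝ} (ht : 0 < t) (c : ℝ) :
    (t / 2) ^ c = (2:ℝ) ^ (-c) * t ^ c := by
  rw [Real.div_rpow ht.le (by norm_num : (0:ℝ) ≤ 2),
    Real.rpow_neg (by norm_num : (0:ℝ) ≤ 2), div_eq_mul_inv, mul_comm]

private lemma one_le_two_rpow_abs (e : ℝ) : (1:ℝ) ≤ 2 ^ |e| := by
  calc (1:ℝ) = 2 ^ (0:ℝ) := (Real.rpow_zero 2).symm
    _ ≤ 2 ^ |e| := Real.rpow_le_rpow_of_exponent_le one_le_two (abs_nonneg e)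

/-- For `1 ≤ x ≤ 2`, `x^e ≤ 2^|e|`. -/
private lemma rpow_le_two_abs {x e : ℝ} (h1 : 1 ≤ x) (h2 : x ≤ 2) : x ^ e ≤ 2 ^ |e| := by
  rcases le_total 0 e with he | he
  · rw [abs_of_nonneg he]
    exact Real.rpow_le_rpow (by linarith) h2 he
  · calc x ^ e ≤ 1 ^ e := Real.rpow_le_rpow_of_nonpos one_pos h1 he
      _ = 1 := Real.one_rpow e
      _ ≤ 2 ^ |e| := one_le_two_rpow_abs e

/-- For `1 ≤ x`, `(1+x)^e ≤ 2^|e| * x^e`. -/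
private lemma one_add_rpow_le {x e : ℝ} (h1 : 1 ≤ x) : (1 + x) ^ e ≤ 2 ^ |e| * x ^ e := by
  rcases le_total 0 e with he | he
  · rw [abs_of_nonneg he, ← Real.mul_rpow (by norm_num) (by linarith)]
    exact Real.rpow_le_rpow (by linarith) (by linarith) he
  · calc (1 + x) ^ e ≤ x ^ e := Real.rpow_le_rpow_of_nonpos (by linarith) (by linarith) he
      _ = 1 * x ^ e := (one_mul _).symm
      _ ≤ 2 ^ |e| * x ^ e :=
        mul_le_mul_of_nonneg_right (one_le_two_rpow_abs e) (Real.rpow_nonneg (by linarith) e)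

/-- For `t/2 ≤ x ≤ 2t`, `x^e ≤ 2^|e| * t^e`. -/
private lemma rpow_comparable {t x e : ℝ} (ht : 0 < t) (h1 : t / 2 ≤ x) (h2 : x ≤ 2 * t) :
    x ^ e ≤ 2 ^ |e| * t ^ e := by
  rcases le_total 0 e with he | he
  · rw [abs_of_nonneg he, ← Real.mul_rpow (by norm_num) ht.le]
    exact Real.rpow_le_rpow (by linarith) h2 he
  · rw [abs_of_nonpos he]
    calc x ^ e ≤ (t / 2) ^ e := Real.rpow_le_rpow_of_nonpos (by linarith) h1 he
      _ = 2 ^ (-e) * t ^ e := half_rpow ht e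

private lemma nonint_a_zero {t a b β σ₂ : ℝ} (ht : 2 ≤ t) (ha : a = 0) (hb : 0 < b) :
    ¬ IntegrableOn (fun τ : ℝ =>
      (t - τ) ^ (-b) * (1 + t - τ) ^ (-β) * τ ^ (-1 + a) * (1 + τ) ^ (1 - a - σ₂))
      (Set.Ioc 0 t) := by
  intro H
  have ht0 : (0:ℝ) < t := by linarith
  have H1 : IntegrableOn (fun τ : ℝ =>
      (t - τ) ^ (-b) * (1 + t - τ) ^ (-β) * τ ^ (-1 + a) * (1 + τ) ^ (1 - a - σ₂))
      (Set.Ioo 0 1) := H.mono_set (fun x hx => ⟨hx.1, by linarith [hx.2.le]⟩)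
  set c : ℝ := t ^ (-b) * min ((1+t) ^ (-β)) (t ^ (-β)) * min 1 ((2:ℝ) ^ (1 - a - σ₂)) with hc
  have hcpos : 0 < c := by
    refine mul_pos (mul_pos (Real.rpow_pos_of_pos ht0 _) (lt_min ?_ ?_)) (lt_min one_pos ?_) <;>
      exact Real.rpow_pos_of_pos (by linarith) _
  have hlow : ∀ τ ∈ Set.Ioo (0:ℝ) 1, c * τ ^ (-1 + a) ≤
      (t - τ) ^ (-b) * (1 + t - τ) ^ (-β) * τ ^ (-1 + a) * (1 + τ) ^ (1 - a - σ₂) := by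
    intro τ hτ
    obtain ⟨hτ0, hτ1⟩ := hτ
    have h1 : t ^ (-b) ≤ (t - τ) ^ (-b) :=
      Real.rpow_le_rpow_of_nonpos (by linarith) (by linarith) (by linarith)
    have h2 : min ((1+t) ^ (-β)) (t ^ (-β)) ≤ (1 + t - τ) ^ (-β) := by
      rcases le_or_gt 0 β with hβ0 | hβ0
      · exact (min_le_left _ _).trans
          (Real.rpow_le_rpow_of_nonpos (by linarith) (by linarith) (by linarith))
      · exact (min_le_right _ _).trans
          (Real.rpow_le_rpow (by linarith) (by linarith) (by linarith))
    have h4 : min 1 ((2:ℝ) ^ (1 - a - σ₂)) ≤ (1 + τ) ^ (1 - a - σ₂) := by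
      rcases le_or_gt 0 (1 - a - σ₂) with he | he
      · refine (min_le_left _ _).trans ?_
        calc (1:ℝ) = 1 ^ (1 - a - σ₂) := (Real.one_rpow _).symm
          _ ≤ (1 + τ) ^ (1 - a - σ₂) := Real.rpow_le_rpow (by norm_num) (by linarith) he
      · exact (min_le_right _ _).trans
          (Real.rpow_le_rpow_of_nonpos (by linarith) (by linarith) he.le)
    have hτn : (0:ℝ) ≤ τ ^ (-1 + a) := Real.rpow_nonneg hτ0.le _
    calc c * τ ^ (-1 + a)
        = t ^ (-b) * min ((1+t) ^ (-β)) (t ^ (-β)) * τ ^ (-1 + a)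
            * min 1 ((2:ℝ) ^ (1 - a - σ₂)) := by rw [hc]; ring
      _ ≤ (t - τ) ^ (-b) * (1 + t - τ) ^ (-β) * τ ^ (-1 + a) * (1 + τ) ^ (1 - a - σ₂) := by
          have n2 : (0:ℝ) ≤ (1 + t - τ) ^ (-β) := Real.rpow_nonneg (by linarith) _
          have n1 : (0:ℝ) ≤ (t - τ) ^ (-b) := Real.rpow_nonneg (by linarith) _
          have nm1 : (0:ℝ) ≤ min ((1+t) ^ (-β)) (t ^ (-β)) :=
            le_min (Real.rpow_nonneg (by linarith) _) (Real.rpow_nonneg (by linarith) _)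
          have nm2 : (0:ℝ) ≤ min 1 ((2:ℝ) ^ (1 - a - σ₂)) :=
            le_min zero_le_one (Real.rpow_nonneg (by norm_num) _)
          have nt : (0:ℝ) ≤ t ^ (-b) := Real.rpow_nonneg ht0.le _
          exact mul_le_mul (mul_le_mul (mul_le_mul h1 h2 nm1 n1) le_rfl hτn (by positivity))
            h4 nm2 (by positivity)
  have H2 : IntegrableOn (fun τ : ℝ => c * τ ^ (-1 + a)) (Set.Ioo 0 1) := by
    refine Integrable.mono H1 ?_ ?_
    · refine ContinuousOn.aestronglyMeasurable ?_ measurableSet_Ioo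
      exact continuousOn_const.mul
        (ContinuousOn.rpow_const continuousOn_id (fun x hx => Or.inl (ne_of_gt hx.1)))
    · refine ae_restrict_of_forall_mem measurableSet_Ioo (fun τ hτ => ?_)
      rw [Real.norm_eq_abs, Real.norm_eq_abs,
        abs_of_nonneg (mul_nonneg hcpos.le (Real.rpow_nonneg hτ.1.le _)),
        abs_of_nonneg]
      · exact hlow τ hτ
      · have h1 : (0:ℝ) ≤ t - τ := by have := hτ.2; linarith
        have h2 : (0:ℝ) ≤ 1 + t - τ := by linarith
        have h3 : (0:ℝ) ≤ τ := hτ.1.le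
        have h4 : (0:ℝ) ≤ 1 + τ := by linarith
        positivity
  have H3 : IntegrableOn (fun τ : ℝ => τ ^ (-1 + a)) (Set.Ioo (0:ℝ) 1) := by
    have := H2.const_mul c⁻¹
    have heq : (fun τ : ℝ => c⁻¹ * (c * τ ^ (-1 + a))) = fun τ : ℝ => τ ^ (-1 + a) := by
      funext τ; rw [← mul_assoc, inv_mul_cancel₀ (ne_of_gt hcpos), one_mul]
    rwa [heq] at this
  have : (-1:ℝ) < -1 + a := by
    have h := H3
    rwa [intervalIntegral.integrableOn_Ioo_rpow_iff zero_lt_one] at h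
  linarith

private lemma nonint_b_ge {t a b β σ₂ : ℝ} (ht : 2 ≤ t) (hb1 : 1 ≤ b) (ha0 : 0 ≤ a)
    (ha1 : a < 1) :
    ¬ IntegrableOn (fun τ : ℝ =>
      (t - τ) ^ (-b) * (1 + t - τ) ^ (-β) * τ ^ (-1 + a) * (1 + τ) ^ (1 - a - σ₂))
      (Set.Ioc 0 t) := by
  intro H
  have ht0 : (0:ℝ) < t := by linarith
  have H1 : IntegrableOn (fun τ : ℝ =>
      (t - τ) ^ (-b) * (1 + t - τ) ^ (-β) * τ ^ (-1 + a) * (1 + τ) ^ (1 - a - σ₂))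
      (Set.Ioo (t-1) t) := H.mono_set (fun x hx => ⟨by linarith [hx.1], hx.2.le⟩)
  set c : ℝ := min 1 ((2:ℝ) ^ (-β)) * t ^ (-1 + a) * min ((1+t) ^ (1 - a - σ₂)) 1 with hc
  have hcpos : 0 < c := by
    refine mul_pos (mul_pos (lt_min one_pos ?_) (Real.rpow_pos_of_pos ht0 _))
      (lt_min ?_ one_pos)
    · exact Real.rpow_pos_of_pos (by norm_num) _
    · exact Real.rpow_pos_of_pos (by linarith) _
  have hlow : ∀ τ ∈ Set.Ioo (t-1) t, c * (t - τ) ^ (-b) ≤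
      (t - τ) ^ (-b) * (1 + t - τ) ^ (-β) * τ ^ (-1 + a) * (1 + τ) ^ (1 - a - σ₂) := by
    intro τ hτ
    obtain ⟨hτ1, hτ2⟩ := hτ
    have hτ0 : (0:ℝ) < τ := by linarith
    have h2 : min 1 ((2:ℝ) ^ (-β)) ≤ (1 + t - τ) ^ (-β) := by
      rcases le_or_gt β 0 with hβ0 | hβ0
      · refine (min_le_left _ _).trans ?_
        calc (1:ℝ) = 1 ^ (-β) := (Real.one_rpow _).symm
          _ ≤ (1 + t - τ) ^ (-β) := Real.rpow_le_rpow (by norm_num) (by linarith) (by linarith)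
      · exact (min_le_right _ _).trans
          (Real.rpow_le_rpow_of_nonpos (by linarith) (by linarith) (by linarith))
    have h3 : t ^ (-1 + a) ≤ τ ^ (-1 + a) :=
      Real.rpow_le_rpow_of_nonpos hτ0 (by linarith) (by linarith)
    have h4 : min ((1+t) ^ (1 - a - σ₂)) 1 ≤ (1 + τ) ^ (1 - a - σ₂) := by
      rcases le_or_gt 0 (1 - a - σ₂) with he | he
      · refine (min_le_right _ _).trans ?_
        calc (1:ℝ) = 1 ^ (1 - a - σ₂) := (Real.one_rpow _).symm
          _ ≤ (1 + τ) ^ (1 - a - σ₂) := Real.rpow_le_rpow (by norm_num) (by linarith) he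
      · exact (min_le_left _ _).trans
          (Real.rpow_le_rpow_of_nonpos (by linarith) (by linarith) he.le)
    have n0 : (0:ℝ) ≤ (t - τ) ^ (-b) := Real.rpow_nonneg (by linarith) _
    have nm1 : (0:ℝ) ≤ min 1 ((2:ℝ) ^ (-β)) :=
      le_min zero_le_one (Real.rpow_nonneg (by norm_num) _)
    have nt : (0:ℝ) ≤ t ^ (-1 + a) := Real.rpow_nonneg ht0.le _
    have nm2 : (0:ℝ) ≤ min ((1+t) ^ (1 - a - σ₂)) 1 :=
      le_min (Real.rpow_nonneg (by linarith) _) zero_le_one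
    have n2 : (0:ℝ) ≤ (1 + t - τ) ^ (-β) := Real.rpow_nonneg (by linarith) _
    calc c * (t - τ) ^ (-b)
        = (t - τ) ^ (-b) * min 1 ((2:ℝ) ^ (-β)) * t ^ (-1 + a)
            * min ((1+t) ^ (1 - a - σ₂)) 1 := by rw [hc]; ring
      _ ≤ (t - τ) ^ (-b) * (1 + t - τ) ^ (-β) * τ ^ (-1 + a) * (1 + τ) ^ (1 - a - σ₂) := by
          exact mul_le_mul (mul_le_mul (mul_le_mul le_rfl h2 nm1 n0) h3 nt (by positivity))
            h4 nm2 (by positivity)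
  have H2 : IntegrableOn (fun τ : ℝ => c * (t - τ) ^ (-b)) (Set.Ioo (t-1) t) := by
    refine Integrable.mono H1 ?_ ?_
    · refine ContinuousOn.aestronglyMeasurable ?_ measurableSet_Ioo
      exact continuousOn_const.mul
        (ContinuousOn.rpow_const (continuousOn_const.sub continuousOn_id)
          (fun x hx => Or.inl (by have := hx.2; intro h; linarith [sub_eq_zero.mp h])))
    · refine ae_restrict_of_forall_mem measurableSet_Ioo (fun τ hτ => ?_)
      have hτ0 : (0:ℝ) < τ := by have := hτ.1; linarith
      rw [Real.norm_eq_abs, Real.norm_eq_abs,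
        abs_of_nonneg (mul_nonneg hcpos.le (Real.rpow_nonneg (by linarith [hτ.2.le]) _)),
        abs_of_nonneg]
      · exact hlow τ hτ
      · have h1 : (0:ℝ) ≤ t - τ := by have := hτ.2; linarith
        have h2 : (0:ℝ) ≤ 1 + t - τ := by linarith
        have h4 : (0:ℝ) ≤ 1 + τ := by linarith
        have h3 : (0:ℝ) ≤ τ := hτ0.le
        positivity
  have H3 : IntegrableOn (fun τ : ℝ => (t - τ) ^ (-b)) (Set.Ioo (t-1) t) := by
    have := H2.const_mul c⁻¹
    have heq : (fun τ : ℝ => c⁻¹ * (c * (t - τ) ^ (-b))) = fun τ : ℝ => (t - τ) ^ (-b) := by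
      funext τ; rw [← mul_assoc, inv_mul_cancel₀ (ne_of_gt hcpos), one_mul]
    rwa [heq] at this
  have H4 : IntervalIntegrable (fun τ : ℝ => (t - τ) ^ (-b)) volume (t-1) t :=
    (intervalIntegrable_iff_integrableOn_Ioo_of_le (by linarith)).mpr H3
  have H5 := (H4.comp_sub_left t).symm
  simp only [sub_sub_cancel, sub_self] at H5
  have H6 : IntegrableOn (fun x : ℝ => x ^ (-b)) (Set.Ioo (0:ℝ) 1) :=
    (intervalIntegrable_iff_integrableOn_Ioo_of_le zero_le_one).mp H5
  rw [intervalIntegral.integrableOn_Ioo_rpow_iff zero_lt_one] at H6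
  linarith

set_option maxHeartbeats 1000000 in
private lemma main_bound {a b β σ₂ : ℝ} (ha : 0 < a) (ha1 : a < 1) (hb : 0 < b) (hb1 : b < 1)
    (hσ : 0 < σ₂) (hβ : 1 - b < β) :
    ∃ K > (0:ℝ), ∀ t : ℝ, 2 ≤ t →
      (∫ τ in Set.Ioc (0:ℝ) t,
        (t - τ) ^ (-b) * (1 + t - τ) ^ (-β) * τ ^ (-1 + a) * (1 + τ) ^ (1 - a - σ₂))
      ≤ K * t ^ (-(min σ₂ b)) := by
  set m := min σ₂ b with hm
  have hmσ : m ≤ σ₂ := min_le_left _ _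
  have hmb : m ≤ b := min_le_right _ _
  have hm0 : 0 < m := lt_min hσ hb
  have hbβ : 1 < b + β := by linarith
  have hβ0 : 0 < β := by linarith
  set e := 1 - a - σ₂ with he
  set σ' := min σ₂ (max (m + 1 - b - β) (1/2)) with hσ'def
  have hσ'pos : 0 < σ' := lt_min hσ (lt_of_lt_of_le one_half_pos (le_max_right _ _))
  have hσ'le : σ' ≤ σ₂ := min_le_left _ _
  have hσ'1 : σ' < 1 :=
    lt_of_le_of_lt (min_le_right _ _) (max_lt (by linarith) (by norm_num))
  have hσ'm : m + 1 - b - β ≤ σ' := le_min (by linarith) (le_max_left _ _)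
  set K₁ : ℝ := 2 ^ (b+β) * 2 ^ |e| with hK₁
  set K₂ : ℝ := 2 ^ (1-a) * 2 ^ |e| with hK₂
  have hK₁0 : 0 < K₁ :=
    mul_pos (Real.rpow_pos_of_pos two_pos _) (Real.rpow_pos_of_pos two_pos _)
  have hK₂0 : 0 < K₂ :=
    mul_pos (Real.rpow_pos_of_pos two_pos _) (Real.rpow_pos_of_pos two_pos _)
  set K : ℝ := K₁ / a + K₁ / (1 - σ') + K₂ / (b + β - 1) + K₂ / (1 - b) with hKdef
  have hKpos : 0 < K := by
    have h1 : 0 < K₁ / a := div_pos hK₁0 ha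
    have h2 : 0 < K₁ / (1 - σ') := div_pos hK₁0 (by linarith)
    have h3 : 0 < K₂ / (b + β - 1) := div_pos hK₂0 (by linarith)
    have h4 : 0 < K₂ / (1 - b) := div_pos hK₂0 (by linarith)
    rw [hKdef]; linarith
  refine ⟨K, hKpos, fun t ht => ?_⟩
  have ht0 : (0:ℝ) < t := by linarith
  have ht1 : (1:ℝ) ≤ t := by linarith
  have h2t : (1:ℝ) ≤ t/2 := by linarith
  have htm1 : t/2 ≤ t - 1 := by linarith
  have ht1t : t - 1 ≤ t := by linarith
  set g : ℝ → ℝ := fun τ =>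
    if τ ≤ 1 then K₁ * t ^ (-(b+β)) * τ ^ (-1 + a)
    else if τ ≤ t/2 then K₁ * t ^ (-(b+β)) * τ ^ (-σ')
    else if τ ≤ t - 1 then K₂ * t ^ (-σ₂) * (t - τ) ^ (-(b+β))
    else K₂ * t ^ (-σ₂) * (t - τ) ^ (-b) with hg
  have hEq1 : EqOn g (fun τ => K₁ * t ^ (-(b+β)) * τ ^ (-1 + a)) (Ioc (0:ℝ) 1) := by
    intro τ hτ; simp only [hg]; rw [if_pos hτ.2]
  have hEq2 : EqOn g (fun τ => K₁ * t ^ (-(b+β)) * τ ^ (-σ')) (Ioc (1:ℝ) (t/2)) := by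
    intro τ hτ; simp only [hg]; rw [if_neg (not_le.mpr hτ.1), if_pos hτ.2]
  have hEq3 : EqOn g (fun τ => K₂ * t ^ (-σ₂) * (t - τ) ^ (-(b+β))) (Ioc (t/2) (t-1)) := by
    intro τ hτ; simp only [hg]
    rw [if_neg (not_le.mpr (lt_of_le_of_lt h2t hτ.1)), if_neg (not_le.mpr hτ.1), if_pos hτ.2]
  have hEq4 : EqOn g (fun τ => K₂ * t ^ (-σ₂) * (t - τ) ^ (-b)) (Ioc (t-1) t) := by
    intro τ hτ; simp only [hg]
    rw [if_neg (not_le.mpr (lt_of_le_of_lt (le_trans h2t htm1) hτ.1)),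
      if_neg (not_le.mpr (lt_of_le_of_lt htm1 hτ.1)), if_neg (not_le.mpr hτ.1)]
  have hint1 : IntegrableOn g (Ioc (0:ℝ) 1) := by
    have h0 : IntervalIntegrable (fun τ : ℝ => τ ^ (-1 + a)) volume 0 1 :=
      intervalIntegral.intervalIntegrable_rpow' (by linarith)
    exact IntegrableOn.congr_fun
      (((intervalIntegrable_iff_integrableOn_Ioc_of_le zero_le_one).mp h0).const_mul
        (K₁ * t ^ (-(b+β)))) (fun τ hτ => (hEq1 hτ).symm) measurableSet_Ioc
  have hint2 : IntegrableOn g (Ioc (1:ℝ) (t/2)) := by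
    have h0 : IntervalIntegrable (fun τ : ℝ => τ ^ (-σ')) volume 1 (t/2) :=
      intervalIntegral.intervalIntegrable_rpow' (by linarith)
    exact IntegrableOn.congr_fun
      (((intervalIntegrable_iff_integrableOn_Ioc_of_le h2t).mp h0).const_mul
        (K₁ * t ^ (-(b+β)))) (fun τ hτ => (hEq2 hτ).symm) measurableSet_Ioc
  have hint3 : IntegrableOn g (Ioc (t/2) (t-1)) := by
    have h0 : IntervalIntegrable (fun u : ℝ => u ^ (-(b+β))) volume 1 (t/2) :=
      intervalIntegral.intervalIntegrable_rpow
        (Or.inr (Set.notMem_uIcc_of_lt one_pos (by linarith)))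
    have h1 := (h0.comp_sub_left t).symm
    have he2 : t - t/2 = t/2 := by ring
    rw [he2] at h1
    exact IntegrableOn.congr_fun
      (((intervalIntegrable_iff_integrableOn_Ioc_of_le htm1).mp h1).const_mul
        (K₂ * t ^ (-σ₂))) (fun τ hτ => (hEq3 hτ).symm) measurableSet_Ioc
  have hint4 : IntegrableOn g (Ioc (t-1) t) := by
    have h0 : IntervalIntegrable (fun u : ℝ => u ^ (-b)) volume 0 1 :=
      intervalIntegral.intervalIntegrable_rpow' (by linarith)
    have h1 := (h0.comp_sub_left t).symm
    have he2 : t - 0 = t := by ring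
    rw [he2] at h1
    exact IntegrableOn.congr_fun
      (((intervalIntegrable_iff_integrableOn_Ioc_of_le ht1t).mp h1).const_mul
        (K₂ * t ^ (-σ₂))) (fun τ hτ => (hEq4 hτ).symm) measurableSet_Ioc
  have hu1 : Ioc (0:ℝ) (t/2) = Ioc 0 1 ∪ Ioc 1 (t/2) :=
    (Set.Ioc_union_Ioc_eq_Ioc zero_le_one h2t).symm
  have hu2 : Ioc (0:ℝ) (t-1) = Ioc 0 (t/2) ∪ Ioc (t/2) (t-1) :=
    (Set.Ioc_union_Ioc_eq_Ioc (by linarith) htm1).symm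
  have hu3 : Ioc (0:ℝ) t = Ioc 0 (t-1) ∪ Ioc (t-1) t :=
    (Set.Ioc_union_Ioc_eq_Ioc (by linarith) ht1t).symm
  have hint12 : IntegrableOn g (Ioc (0:ℝ) (t/2)) := by rw [hu1]; exact hint1.union hint2
  have hint123 : IntegrableOn g (Ioc (0:ℝ) (t-1)) := by rw [hu2]; exact hint12.union hint3
  have hintg : IntegrableOn g (Ioc (0:ℝ) t) := by rw [hu3]; exact hint123.union hint4
  have hgsum : ∫ τ in Ioc (0:ℝ) t, g τ =
      (∫ τ in Ioc (0:ℝ) 1, g τ) + (∫ τ in Ioc (1:ℝ) (t/2), g τ)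
      + (∫ τ in Ioc (t/2) (t-1), g τ) + (∫ τ in Ioc (t-1) t, g τ) := by
    rw [hu3, setIntegral_union (Set.Ioc_disjoint_Ioc_of_le le_rfl) measurableSet_Ioc hint123 hint4,
      hu2, setIntegral_union (Set.Ioc_disjoint_Ioc_of_le le_rfl) measurableSet_Ioc hint12 hint3,
      hu1, setIntegral_union (Set.Ioc_disjoint_Ioc_of_le le_rfl) measurableSet_Ioc hint1 hint2]
  -- pointwise comparison
  have hhalf : ∀ c : ℝ, (t/2) ^ (-c) = 2 ^ c * t ^ (-c) := fun c => by
    rw [half_rpow ht0, neg_neg]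
  have h2bβ : (2:ℝ) ^ b * 2 ^ β = 2 ^ (b+β) := (Real.rpow_add two_pos b β).symm
  have htbβ : t ^ (-b) * t ^ (-β) = t ^ (-(b+β)) := by
    rw [← Real.rpow_add ht0]; congr 1; ring
  have hle : ∀ τ ∈ Ioc (0:ℝ) t,
      (t - τ) ^ (-b) * (1 + t - τ) ^ (-β) * τ ^ (-1 + a) * (1 + τ) ^ e ≤ g τ := by
    intro τ hτ
    obtain ⟨hτ0, hτt⟩ := hτ
    have nτ1 : (0:ℝ) ≤ τ ^ (-1 + a) := Real.rpow_nonneg hτ0.le _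
    have nhb : (0:ℝ) ≤ (t/2) ^ (-b) := Real.rpow_nonneg (by linarith) _
    have nhβ : (0:ℝ) ≤ (t/2) ^ (-β) := Real.rpow_nonneg (by linarith) _
    have ntτb : (0:ℝ) ≤ (t - τ) ^ (-b) := Real.rpow_nonneg (by linarith) _
    have ntτβ : (0:ℝ) ≤ (t - τ) ^ (-β) := Real.rpow_nonneg (by linarith) _
    have nha : (0:ℝ) ≤ (t/2) ^ (-1 + a) := Real.rpow_nonneg (by linarith) _
    have n2e : (0:ℝ) ≤ (2:ℝ) ^ |e| * t ^ e :=
      mul_nonneg (Real.rpow_nonneg (by norm_num) _) (Real.rpow_nonneg ht0.le _)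
    have nB : (0:ℝ) ≤ (1 + t - τ) ^ (-β) := Real.rpow_nonneg (by linarith) _
    have nD : (0:ℝ) ≤ (1 + τ) ^ e := Real.rpow_nonneg (by linarith) _
    rcases le_or_gt τ 1 with hc1 | hc1
    · rw [hEq1 ⟨hτ0, hc1⟩]
      have f1 : (t - τ) ^ (-b) ≤ (t/2) ^ (-b) :=
        Real.rpow_le_rpow_of_nonpos (by linarith) (by linarith) (by linarith)
      have f2 : (1 + t - τ) ^ (-β) ≤ (t/2) ^ (-β) :=
        Real.rpow_le_rpow_of_nonpos (by linarith) (by linarith) (by linarith)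
      have f4 : (1 + τ) ^ e ≤ 2 ^ |e| := rpow_le_two_abs (by linarith) (by linarith)
      calc (t - τ) ^ (-b) * (1 + t - τ) ^ (-β) * τ ^ (-1 + a) * (1 + τ) ^ e
          ≤ (t/2) ^ (-b) * (t/2) ^ (-β) * τ ^ (-1 + a) * 2 ^ |e| :=
            mul_le_mul (mul_le_mul (mul_le_mul f1 f2 nB nhb) le_rfl nτ1
                (mul_nonneg nhb nhβ)) f4 nD (mul_nonneg (mul_nonneg nhb nhβ) nτ1)
        _ = K₁ * t ^ (-(b+β)) * τ ^ (-1 + a) := by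
            rw [hhalf b, hhalf β, hK₁, ← h2bβ, ← htbβ]; ring
    · rcases le_or_gt τ (t/2) with hc2 | hc2
      · rw [hEq2 ⟨hc1, hc2⟩]
        have f1 : (t - τ) ^ (-b) ≤ (t/2) ^ (-b) :=
          Real.rpow_le_rpow_of_nonpos (by linarith) (by linarith) (by linarith)
        have f2 : (1 + t - τ) ^ (-β) ≤ (t/2) ^ (-β) :=
          Real.rpow_le_rpow_of_nonpos (by linarith) (by linarith) (by linarith)
        have f4 : (1 + τ) ^ e ≤ 2 ^ |e| * τ ^ e := one_add_rpow_le hc1.le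
        have hτe : τ ^ (-1 + a) * τ ^ e = τ ^ (-σ₂) := by
          rw [← Real.rpow_add hτ0]; congr 1; rw [he]; ring
        calc (t - τ) ^ (-b) * (1 + t - τ) ^ (-β) * τ ^ (-1 + a) * (1 + τ) ^ e
            ≤ (t/2) ^ (-b) * (t/2) ^ (-β) * τ ^ (-1 + a) * (2 ^ |e| * τ ^ e) :=
              mul_le_mul (mul_le_mul (mul_le_mul f1 f2 nB nhb) le_rfl nτ1
                  (mul_nonneg nhb nhβ)) f4 nD (mul_nonneg (mul_nonneg nhb nhβ) nτ1)
          _ = K₁ * t ^ (-(b+β)) * τ ^ (-σ₂) := by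
              rw [hhalf b, hhalf β, hK₁, ← h2bβ, ← htbβ, ← hτe]; ring
          _ ≤ K₁ * t ^ (-(b+β)) * τ ^ (-σ') := by
              refine mul_le_mul_of_nonneg_left
                (Real.rpow_le_rpow_of_exponent_le hc1.le (by linarith)) ?_
              exact mul_nonneg hK₁0.le (Real.rpow_nonneg ht0.le _)
      · have hτe2 : t ^ (-1 + a) * t ^ e = t ^ (-σ₂) := by
          rw [← Real.rpow_add ht0]; congr 1; rw [he]; ring
        have f3 : τ ^ (-1 + a) ≤ (t/2) ^ (-1 + a) :=
          Real.rpow_le_rpow_of_nonpos (by linarith) hc2.le (by linarith)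
        have hhalfa : (t/2) ^ (-1+a) = 2 ^ (1-a) * t ^ (-1+a) := by
          have : (-1+a : ℝ) = -(1-a) := by ring
          rw [this, hhalf]
        rcases le_or_gt τ (t-1) with hc3 | hc3
        · rw [hEq3 ⟨hc2, hc3⟩]
          have f2 : (1 + t - τ) ^ (-β) ≤ (t - τ) ^ (-β) :=
            Real.rpow_le_rpow_of_nonpos (by linarith) (by linarith) (by linarith)
          have f4 : (1 + τ) ^ e ≤ 2 ^ |e| * t ^ e :=
            rpow_comparable ht0 (by linarith) (by linarith)
          have htτ : (t - τ) ^ (-b) * (t - τ) ^ (-β) = (t - τ) ^ (-(b+β)) := by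
            rw [← Real.rpow_add (by linarith : (0:ℝ) < t - τ)]; congr 1; ring
          calc (t - τ) ^ (-b) * (1 + t - τ) ^ (-β) * τ ^ (-1 + a) * (1 + τ) ^ e
              ≤ (t - τ) ^ (-b) * (t - τ) ^ (-β) * (t/2) ^ (-1 + a) * (2 ^ |e| * t ^ e) :=
                mul_le_mul (mul_le_mul (mul_le_mul le_rfl f2 nB ntτb) f3 nτ1
                    (mul_nonneg ntτb ntτβ)) f4 nD
                  (mul_nonneg (mul_nonneg ntτb ntτβ) nha)
            _ = K₂ * t ^ (-σ₂) * (t - τ) ^ (-(b+β)) := by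
                rw [htτ, hhalfa, hK₂, ← hτe2]; ring
        · rw [hEq4 ⟨hc3, hτt⟩]
          have f2 : (1 + t - τ) ^ (-β) ≤ 1 :=
            Real.rpow_le_one_of_one_le_of_nonpos (by linarith) (by linarith)
          have f4 : (1 + τ) ^ e ≤ 2 ^ |e| * t ^ e :=
            rpow_comparable ht0 (by linarith) (by linarith)
          calc (t - τ) ^ (-b) * (1 + t - τ) ^ (-β) * τ ^ (-1 + a) * (1 + τ) ^ e
              ≤ (t - τ) ^ (-b) * 1 * (t/2) ^ (-1 + a) * (2 ^ |e| * t ^ e) :=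
                mul_le_mul (mul_le_mul (mul_le_mul le_rfl f2 nB ntτb) f3 nτ1
                    (mul_nonneg ntτb zero_le_one)) f4 nD
                  (mul_nonneg (mul_nonneg ntτb zero_le_one) nha)
            _ = K₂ * t ^ (-σ₂) * (t - τ) ^ (-b) := by
                rw [hhalfa, hK₂, ← hτe2]; ring
  have hnn : ∀ τ ∈ Ioc (0:ℝ) t, 0 ≤
      (t - τ) ^ (-b) * (1 + t - τ) ^ (-β) * τ ^ (-1 + a) * (1 + τ) ^ e := by
    intro τ hτ
    have h1 : (0:ℝ) ≤ t - τ := by linarith [hτ.2]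
    have h2 : (0:ℝ) ≤ 1 + t - τ := by linarith
    have h3 : (0:ℝ) ≤ τ := hτ.1.le
    have h4 : (0:ℝ) ≤ 1 + τ := by linarith
    positivity
  -- bounds on the four pieces
  have htsm : t ^ (-σ₂) ≤ t ^ (-m) := Real.rpow_le_rpow_of_exponent_le ht1 (by linarith)
  have htbm : t ^ (-(b+β)) ≤ t ^ (-m) := Real.rpow_le_rpow_of_exponent_le ht1 (by linarith)
  have ntb : (0:ℝ) ≤ t ^ (-(b+β)) := Real.rpow_nonneg ht0.le _
  have hB1 : (∫ τ in Ioc (0:ℝ) 1, g τ) ≤ K₁ / a * t ^ (-m) := by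
    rw [setIntegral_congr_fun measurableSet_Ioc hEq1,
      ← intervalIntegral.integral_of_le zero_le_one,
      intervalIntegral.integral_const_mul,
      integral_rpow (Or.inl (by linarith : (-1:ℝ) < -1 + a))]
    have hexp : (-1 : ℝ) + a + 1 = a := by ring
    rw [hexp, Real.one_rpow, Real.zero_rpow (ne_of_gt ha), sub_zero]
    calc K₁ * t ^ (-(b+β)) * (1 / a) ≤ K₁ * t ^ (-m) * (1 / a) := by
          refine mul_le_mul_of_nonneg_right (mul_le_mul_of_nonneg_left htbm hK₁0.le) ?_
          positivity
      _ = K₁ / a * t ^ (-m) := by ring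
  have hB2 : (∫ τ in Ioc (1:ℝ) (t/2), g τ) ≤ K₁ / (1 - σ') * t ^ (-m) := by
    rw [setIntegral_congr_fun measurableSet_Ioc hEq2,
      ← intervalIntegral.integral_of_le h2t,
      intervalIntegral.integral_const_mul,
      integral_rpow (Or.inl (by linarith : (-1:ℝ) < -σ'))]
    rw [Real.one_rpow]
    set X := (t/2) ^ (-σ' + 1) with hXdef
    have hD : (0:ℝ) < -σ' + 1 := by linarith
    have hX : X ≤ t ^ (-σ' + 1) := by
      rw [hXdef]
      exact Real.rpow_le_rpow (by linarith) (by linarith) (by linarith)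
    have hXt : t ^ (-(b+β)) * X ≤ t ^ (-m) := by
      calc t ^ (-(b+β)) * X ≤ t ^ (-(b+β)) * t ^ (-σ' + 1) :=
            mul_le_mul_of_nonneg_left hX ntb
        _ = t ^ (-(b+β) + (-σ' + 1)) := (Real.rpow_add ht0 _ _).symm
        _ ≤ t ^ (-m) := Real.rpow_le_rpow_of_exponent_le ht1 (by linarith)
    calc K₁ * t ^ (-(b+β)) * ((X - 1) / (-σ' + 1))
        ≤ K₁ * t ^ (-(b+β)) * (X / (-σ' + 1)) := by
          refine mul_le_mul_of_nonneg_left ?_ (mul_nonneg hK₁0.le ntb)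
          exact div_le_div_of_nonneg_right (by linarith) hD.le
      _ = K₁ * ((t ^ (-(b+β)) * X) / (-σ' + 1)) := by ring
      _ ≤ K₁ * (t ^ (-m) / (-σ' + 1)) :=
          mul_le_mul_of_nonneg_left (div_le_div_of_nonneg_right hXt hD.le) hK₁0.le
      _ = K₁ / (1 - σ') * t ^ (-m) := by
          rw [show (-σ' + 1 : ℝ) = 1 - σ' from by ring]; ring
  have hB3 : (∫ τ in Ioc (t/2) (t-1), g τ) ≤ K₂ / (b + β - 1) * t ^ (-m) := by
    rw [setIntegral_congr_fun measurableSet_Ioc hEq3,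
      ← intervalIntegral.integral_of_le htm1,
      intervalIntegral.integral_const_mul,
      intervalIntegral.integral_comp_sub_left (fun u : ℝ => u ^ (-(b+β))) t]
    have e1 : t - (t - 1) = 1 := by ring
    have e2 : t - t/2 = t/2 := by ring
    rw [e1, e2, integral_rpow
      (Or.inr ⟨by intro h; linarith, Set.notMem_uIcc_of_lt one_pos (by linarith)⟩)]
    rw [Real.one_rpow]
    set X := (t/2) ^ (-(b+β) + 1) with hXdef
    have hX1 : X ≤ 1 := by
      rw [hXdef]; exact Real.rpow_le_one_of_one_le_of_nonpos h2t (by linarith)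
    have hX0 : (0:ℝ) ≤ X := by rw [hXdef]; exact Real.rpow_nonneg (by linarith) _
    have hden : (-(b+β) + 1 : ℝ) = -(b + β - 1) := by ring
    have hval : (X - 1) / (-(b+β) + 1) ≤ 1 / (b + β - 1) := by
      rw [hden, div_neg, ← neg_div, neg_sub]
      exact div_le_div_of_nonneg_right (by linarith) (by linarith)
    have hv0 : 0 ≤ (X - 1) / (-(b+β) + 1) := by
      rw [hden, div_neg, ← neg_div, neg_sub]
      exact div_nonneg (by linarith) (by linarith)
    calc K₂ * t ^ (-σ₂) * ((X - 1) / (-(b+β) + 1))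
        ≤ K₂ * t ^ (-m) * (1 / (b + β - 1)) :=
          mul_le_mul (mul_le_mul_of_nonneg_left htsm hK₂0.le) hval hv0
            (mul_nonneg hK₂0.le (Real.rpow_nonneg ht0.le _))
      _ = K₂ / (b + β - 1) * t ^ (-m) := by ring
  have hB4 : (∫ τ in Ioc (t-1) t, g τ) ≤ K₂ / (1 - b) * t ^ (-m) := by
    rw [setIntegral_congr_fun measurableSet_Ioc hEq4,
      ← intervalIntegral.integral_of_le ht1t,
      intervalIntegral.integral_const_mul,
      intervalIntegral.integral_comp_sub_left (fun u : ℝ => u ^ (-b)) t]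
    have e1 : t - (t - 1) = 1 := by ring
    have e2 : t - t = 0 := by ring
    rw [e1, e2, integral_rpow (Or.inl (by linarith : (-1:ℝ) < -b))]
    rw [Real.one_rpow, Real.zero_rpow (by intro h; linarith : (-b + 1 : ℝ) ≠ 0), sub_zero]
    calc K₂ * t ^ (-σ₂) * (1 / (-b + 1))
        ≤ K₂ * t ^ (-m) * (1 / (-b + 1)) := by
          refine mul_le_mul_of_nonneg_right (mul_le_mul_of_nonneg_left htsm hK₂0.le) ?_
          have : (0:ℝ) < -b + 1 := by linarith
          positivity
      _ = K₂ / (1 - b) * t ^ (-m) := by rw [show (-b + 1 : ℝ) = 1 - b by ring]; ring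
  calc (∫ τ in Set.Ioc (0:ℝ) t,
        (t - τ) ^ (-b) * (1 + t - τ) ^ (-β) * τ ^ (-1 + a) * (1 + τ) ^ e)
      ≤ ∫ τ in Ioc (0:ℝ) t, g τ :=
        integral_mono_of_nonneg (ae_restrict_of_forall_mem measurableSet_Ioc hnn) hintg
          (ae_restrict_of_forall_mem measurableSet_Ioc hle)
    _ = (∫ τ in Ioc (0:ℝ) 1, g τ) + (∫ τ in Ioc (1:ℝ) (t/2), g τ)
        + (∫ τ in Ioc (t/2) (t-1), g τ) + (∫ τ in Ioc (t-1) t, g τ) := hgsum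
    _ ≤ K₁ / a * t ^ (-m) + K₁ / (1 - σ') * t ^ (-m)
        + K₂ / (b + β - 1) * t ^ (-m) + K₂ / (1 - b) * t ^ (-m) := by
        gcongr
    _ = K * t ^ (-m) := by rw [hKdef]; ring

/-- Decay rate of a Duhamel term: if
`‖v(t)‖ ≤ C t^{−b}‖f‖ + ‖f‖ ∫₀ᵗ (t−τ)^{−b}(1+t−τ)^{−β} τ^{−1+a}(1+τ)^{1−a−σ₂} dτ`
with `0 ≤ a < 1`, `σ₂ > 0`, `b > 0`, `β > 1 − b`, then for `t ≥ 2`,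
`‖v(t)‖ ≤ C' t^{−min{σ₂,b}}‖f‖`. -/
theorem duhamel_min_decay {E F : Type*} [NormedAddCommGroup E] [NormedAddCommGroup F]
    (v : ℝ → E) (f : F) (a b β σ₂ C : ℝ)
    (ha0 : 0 ≤ a) (ha1 : a < 1) (hb : 0 < b) (hσ : 0 < σ₂) (hβ : 1 - b < β) (hC : 0 < C)
    (hyp : ∀ t : ℝ, 0 < t →
      ‖v t‖ ≤ C * t ^ (-b) * ‖f‖ +
        ‖f‖ * ∫ τ in Set.Ioc (0:ℝ) t,
          (t - τ) ^ (-b) * (1 + t - τ) ^ (-β) * τ ^ (-1 + a) * (1 + τ) ^ (1 - a - σ₂)) :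
    ∃ C' > (0:ℝ), ∀ t : ℝ, 2 ≤ t → ‖v t‖ ≤ C' * t ^ (-(min σ₂ b)) * ‖f‖ := by
  set m := min σ₂ b with hm
  have hm_pos : 0 < m := lt_min hσ hb
  have hmσ : m ≤ σ₂ := min_le_left _ _
  have hmb : m ≤ b := min_le_right _ _
  have key : ∃ K > (0:ℝ), ∀ t : ℝ, 2 ≤ t →
      (∫ τ in Set.Ioc (0:ℝ) t,
        (t - τ) ^ (-b) * (1 + t - τ) ^ (-β) * τ ^ (-1 + a) * (1 + τ) ^ (1 - a - σ₂))
      ≤ K * t ^ (-m) := by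
    rcases lt_or_ge b 1 with hb1 | hb1
    · rcases eq_or_lt_of_le ha0 with ha | ha
      · refine ⟨1, one_pos, fun t ht => ?_⟩
        rw [integral_undef (nonint_a_zero ht ha.symm hb)]
        simpa using (Real.rpow_pos_of_pos (show (0:ℝ) < t by linarith) (-m)).le
      · exact main_bound ha ha1 hb hb1 hσ hβ
    · refine ⟨1, one_pos, fun t ht => ?_⟩
      rw [integral_undef (nonint_b_ge ht hb1 ha0 ha1)]
      simpa using (Real.rpow_pos_of_pos (show (0:ℝ) < t by linarith) (-m)).le
  obtain ⟨K, hK, hKle⟩ := key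
  refine ⟨C + K, by positivity, fun t ht => ?_⟩
  have ht0 : (0:ℝ) < t := by linarith
  have ht1 : (1:ℝ) ≤ t := by linarith
  have h2 : t ^ (-b) ≤ t ^ (-m) := Real.rpow_le_rpow_of_exponent_le ht1 (by linarith)
  have h3 := hKle t ht
  have h4 := hyp t ht0
  have hf0 : (0:ℝ) ≤ ‖f‖ := norm_nonneg f
  calc ‖v t‖ ≤ C * t ^ (-b) * ‖f‖ + ‖f‖ * ∫ τ in Set.Ioc (0:ℝ) t,
        (t - τ) ^ (-b) * (1 + t - τ) ^ (-β) * τ ^ (-1 + a) * (1 + τ) ^ (1 - a - σ₂) := h4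
    _ ≤ C * t ^ (-m) * ‖f‖ + ‖f‖ * (K * t ^ (-m)) := by
        gcongr
    _ = (C + K) * t ^ (-m) * ‖f‖ := by ring
end
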